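/- Let ε ∈ (0, 1/2) and α > 1 be real numbers, and let v_1, …, v_n ∈ ℝ^d with n ≥ 2. There exist a positive integer D with D ≤ 4·d·⌈1/ε⌉·⌈log₂ n⌉ and vectors w_1, …, w_n ∈ [−(0.5+ε)α, (0.5+ε)α]^D such that for all i, j ∈ {1,…,n}: ‖w_i − w_j‖_∞ ≤ 1 if and only if ‖v_i − v_j‖_∞ ≤ 1, and ‖w_i − w_j‖_∞ ≥ α if and only if ‖v_i − v_j‖_∞ ≥ α. -/

import Mathlib

open Metric Set MeasureTheory ENNReal

set_option maxHeartbeats 2000000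



noncomputable def clampR (hi z : ℝ) : ℝ := max 0 (min hi z)

lemma clampR_nonneg (hi z : ℝ) : 0 ≤ clampR hi z := le_max_left _ _

lemma clampR_le (hi z : ℝ) (h : 0 ≤ hi) : clampR hi z ≤ hi := by
  refine max_le h (min_le_left _ _)

lemma clampR_eval_mem (hi z : ℝ) (h0 : 0 ≤ z) (h1 : z ≤ hi) : clampR hi z = z := by
  unfold clampR; rw [min_eq_right h1, max_eq_right h0]

lemma clampR_eval_ge (hi z : ℝ) (h0 : 0 ≤ hi) (h1 : hi ≤ z) : clampR hi z = hi := by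
  unfold clampR; rw [min_eq_left h1, max_eq_right h0]

lemma clampR_mono (hi : ℝ) {a b : ℝ} (h : a ≤ b) : clampR hi a ≤ clampR hi b := by
  exact max_le_max le_rfl (min_le_min le_rfl h)

lemma clampR_lip (hi a b : ℝ) : |clampR hi a - clampR hi b| ≤ |a - b| := by
  have h1 : |clampR hi a - clampR hi b| ≤ |min hi a - min hi b| := by
    unfold clampR
    have := abs_max_sub_max_le_abs (min hi a) (min hi b) 0
    simpa [max_comm] using this
  refine h1.trans ?_
  have := abs_min_sub_min_le_max hi a hi b
  simpa using this

noncomputable def latt (t P : ℝ) : Set ℝ := Set.range fun k : ℤ => t + P * k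

lemma latt_nonempty (t P : ℝ) : (latt t P).Nonempty := ⟨t + P * (0 : ℤ), ⟨0, rfl⟩⟩

lemma le_infDist_latt {t P r z : ℝ} (h : ∀ k : ℤ, r ≤ |z - (t + P * k)|) :
    r ≤ Metric.infDist z (latt t P) := by
  by_contra hlt
  push_neg at hlt
  obtain ⟨y, ⟨k, rfl⟩, hxy⟩ := (Metric.infDist_lt_iff (latt_nonempty t P)).1 hlt
  rw [Real.dist_eq] at hxy
  exact absurd (h k) (by simpa using not_le.2 hxy)

lemma infDist_latt_le (t P z : ℝ) (k : ℤ) : Metric.infDist z (latt t P) ≤ |z - (t + P * k)| := by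
  have := Metric.infDist_le_dist_of_mem (x := z) (s := latt t P) (y := t + P * k) ⟨k, rfl⟩
  rwa [Real.dist_eq] at this

lemma infDist_latt_eval {t P z v : ℝ} (hP : 0 < P) (k : ℤ) (hv0 : 0 ≤ v) (hvP : v ≤ P)
    (hz : z = t + P * k + v) : Metric.infDist z (latt t P) = min v (P - v) := by
  apply le_antisymm
  · rcases le_total v (P - v) with h | h
    · rw [min_eq_left h]
      have h2 := infDist_latt_le t P z k
      rw [hz] at h2 ⊢
      rwa [show t + P * k + v - (t + P * k) = v by ring, abs_of_nonneg hv0] at h2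
    · rw [min_eq_right h]
      have h2 := infDist_latt_le t P z (k + 1)
      rw [hz] at h2 ⊢
      rw [show t + P * ((k : ℤ) + 1 : ℤ) = t + P * k + P by push_cast; ring] at h2
      rw [show t + P * k + v - (t + P * k + P) = v - P by ring,
        abs_of_nonpos (by linarith)] at h2
      linarith
  · apply le_infDist_latt
    intro m
    rw [hz, show t + P * k + v - (t + P * m) = P * ((k : ℝ) - m) + v by ring]
    rcases le_or_gt (m : ℝ) (k : ℝ) with h | h
    · have h1 : 0 ≤ P * ((k : ℝ) - m) := mul_nonneg hP.le (by linarith)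
      rw [abs_of_nonneg (by linarith)]
      have : min v (P - v) ≤ v := min_le_left _ _
      linarith
    · have hk1 : (k : ℝ) - m ≤ -1 := by
        have h0 : (k : ℤ) + 1 ≤ m := by exact_mod_cast h
        have h0' : ((k : ℤ) : ℝ) + 1 ≤ (m : ℝ) := by exact_mod_cast h0
        linarith
      have h1 : P * ((k : ℝ) - m) ≤ -P := by nlinarith
      rw [abs_of_nonpos (by linarith)]
      have : min v (P - v) ≤ P - v := min_le_right _ _
      linarith

lemma infDist_latt_lip (t P a b : ℝ) :
    |Metric.infDist a (latt t P) - Metric.infDist b (latt t P)| ≤ |a - b| := by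
  have h1 := Metric.infDist_le_infDist_add_dist (x := a) (y := b) (s := latt t P)
  have h2 := Metric.infDist_le_infDist_add_dist (x := b) (y := a) (s := latt t P)
  rw [Real.dist_eq] at h1 h2
  rw [abs_sub_comm] at h2
  rw [abs_le]
  constructor
  · linarith [neg_abs_le (a - b)]
  · linarith [le_abs_self (a - b)]

/-- the general wave gadget -/
noncomputable def gad (h P B t z : ℝ) : ℝ :=
  clampR (2*h) (Metric.infDist z (latt t P) - B/2) - h

section gadprops
lemma gad_bound (h P B t z : ℝ) (hh : 0 ≤ h) : |gad h P B t z| ≤ h := by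
  unfold gad
  rw [abs_le]
  constructor
  · linarith [clampR_nonneg (2*h) (Metric.infDist z (latt t P) - B/2)]
  · linarith [clampR_le (2*h) (Metric.infDist z (latt t P) - B/2) (by linarith)]

lemma gad_lip (h P B t a b : ℝ) : |gad h P B t a - gad h P B t b| ≤ |a - b| := by
  unfold gad
  have h1 := clampR_lip (2*h) (Metric.infDist a (latt t P) - B/2)
    (Metric.infDist b (latt t P) - B/2)
  have h2 := infDist_latt_lip t P a b
  calc |clampR (2*h) (Metric.infDist a (latt t P) - B/2) - h -
      (clampR (2*h) (Metric.infDist b (latt t P) - B/2) - h)|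
      = |clampR (2*h) (Metric.infDist a (latt t P) - B/2) -
        clampR (2*h) (Metric.infDist b (latt t P) - B/2)| := by ring_nf
    _ ≤ |Metric.infDist a (latt t P) - B/2 - (Metric.infDist b (latt t P) - B/2)| := h1
    _ = |Metric.infDist a (latt t P) - Metric.infDist b (latt t P)| := by ring_nf
    _ ≤ |a - b| := h2

end gadprops

/-- gap compression -/
lemma compression (α : ℝ) (hα : 0 < α) (n : ℕ) (hn : 0 < n) (a : Fin n → ℝ) :
    ∃ c : Fin n → ℝ, (∀ i, 0 ≤ c i ∧ c i ≤ n * α) ∧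
      (∀ i j, |c i - c j| ≤ |a i - a j|) ∧
      (∀ i j, min |a i - a j| α ≤ |c i - c j|) := by
  have : Nonempty (Fin n) := ⟨⟨0, hn⟩⟩
  obtain ⟨i₀, -, hmin⟩ := Finset.exists_min_image Finset.univ a ⟨⟨0, hn⟩, Finset.mem_univ _⟩
  have hmin' : ∀ i, a i₀ ≤ a i := fun i => hmin i (Finset.mem_univ i)
  set U : Set ℝ := ⋃ i, Ico (a i) (a i + α) with hU
  have hUm : MeasurableSet U := MeasurableSet.iUnion fun i => measurableSet_Ico
  have hUvol : volume U ≤ (n : ℝ≥0∞) * ENNReal.ofReal α := by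
    calc volume U ≤ ∑ i : Fin n, volume (Ico (a i) (a i + α)) := measure_iUnion_fintype_le _ _
      _ = ∑ _i : Fin n, ENNReal.ofReal α := by
          simp [Real.volume_Ico]
      _ = (n : ℝ≥0∞) * ENNReal.ofReal α := by
          simp [Finset.sum_const, nsmul_eq_mul]
  have hUfin : volume U ≠ ⊤ := by
    refine ne_top_of_le_ne_top ?_ hUvol
    exact ENNReal.mul_ne_top (by simp) ENNReal.ofReal_ne_top
  set c : Fin n → ℝ := fun i => (volume (U ∩ Ioc (a i₀) (a i))).toReal with hc
  have hfin : ∀ i, volume (U ∩ Ioc (a i₀) (a i)) ≠ ⊤ := fun i =>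
    ne_top_of_le_ne_top hUfin (measure_mono inter_subset_left)
  -- difference formula
  have hdiff : ∀ i j, a i ≤ a j →
      c j - c i = (volume (U ∩ Ioc (a i) (a j))).toReal := by
    intro i j hij
    have hsplit : U ∩ Ioc (a i₀) (a j) = (U ∩ Ioc (a i₀) (a i)) ∪ (U ∩ Ioc (a i) (a j)) := by
      rw [← inter_union_distrib_left, Set.Ioc_union_Ioc_eq_Ioc (hmin' i) hij]
    have hdisj : Disjoint (U ∩ Ioc (a i₀) (a i)) (U ∩ Ioc (a i) (a j)) := by
      exact (Set.Ioc_disjoint_Ioc_of_le le_rfl).mono inter_subset_right inter_subset_right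
    have hm2 : MeasurableSet (U ∩ Ioc (a i) (a j)) := hUm.inter measurableSet_Ioc
    have hmu := measure_union (μ := volume) hdisj hm2
    rw [← hsplit] at hmu
    have hfin2 : volume (U ∩ Ioc (a i) (a j)) ≠ ⊤ :=
      ne_top_of_le_ne_top hUfin (measure_mono inter_subset_left)
    rw [hc]
    simp only
    rw [hmu, ENNReal.toReal_add (hfin i) hfin2]
    ring
  have hmono : ∀ i j, a i ≤ a j → c i ≤ c j := by
    intro i j hij
    have := hdiff i j hij
    have h0 : 0 ≤ (volume (U ∩ Ioc (a i) (a j))).toReal := ENNReal.toReal_nonneg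
    linarith
  -- upper bound on differences
  have hupper : ∀ i j, a i ≤ a j → c j - c i ≤ a j - a i := by
    intro i j hij
    rw [hdiff i j hij]
    have h1 : volume (U ∩ Ioc (a i) (a j)) ≤ ENNReal.ofReal (a j - a i) := by
      calc volume (U ∩ Ioc (a i) (a j)) ≤ volume (Ioc (a i) (a j)) :=
            measure_mono inter_subset_right
        _ = ENNReal.ofReal (a j - a i) := Real.volume_Ioc
    calc (volume (U ∩ Ioc (a i) (a j))).toReal ≤ (ENNReal.ofReal (a j - a i)).toReal :=
          ENNReal.toReal_mono ENNReal.ofReal_ne_top h1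
      _ = a j - a i := ENNReal.toReal_ofReal (by linarith)
  -- lower bound on differences
  have hlower : ∀ i j, a i ≤ a j → min (a j - a i) α ≤ c j - c i := by
    intro i j hij
    rw [hdiff i j hij]
    have hsub : Ioo (a i) (min (a i + α) (a j)) ⊆ U ∩ Ioc (a i) (a j) := by
      intro z hz
      obtain ⟨hz1, hz2⟩ := hz
      constructor
      · exact mem_iUnion.2 ⟨i, ⟨hz1.le, lt_of_lt_of_le hz2 (min_le_left _ _)⟩⟩
      · exact ⟨hz1, le_of_lt (lt_of_lt_of_le hz2 (min_le_right _ _))⟩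
    have h1 : ENNReal.ofReal (min (a i + α) (a j) - a i) ≤ volume (U ∩ Ioc (a i) (a j)) := by
      rw [← Real.volume_Ioo]
      exact measure_mono hsub
    have h2 : min (a i + α) (a j) - a i = min α (a j - a i) := by
      rcases le_total (a i + α) (a j) with h | h
      · rw [min_eq_left h, min_eq_left (by linarith)]; ring
      · rw [min_eq_right h, min_eq_right (by linarith)]
    calc min (a j - a i) α = min α (a j - a i) := min_comm _ _
      _ = (ENNReal.ofReal (min α (a j - a i))).toReal := by
          rw [ENNReal.toReal_ofReal (le_min hα.le (by linarith))]
      _ ≤ (volume (U ∩ Ioc (a i) (a j))).toReal := by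
          refine ENNReal.toReal_mono (ne_top_of_le_ne_top hUfin (measure_mono inter_subset_left)) ?_
          rw [← h2]; exact h1
  have habs : ∀ i j, a i ≤ a j → |c i - c j| = c j - c i ∧ |a i - a j| = a j - a i := by
    intro i j h
    have h1 : 0 ≤ c j - c i := by linarith [hmono i j h]
    have h2 : 0 ≤ a j - a i := by linarith
    rw [abs_sub_comm (c i) (c j), abs_of_nonneg h1, abs_sub_comm (a i) (a j), abs_of_nonneg h2]
    exact ⟨rfl, rfl⟩
  refine ⟨c, fun i => ⟨ENNReal.toReal_nonneg, ?_⟩, ?_, ?_⟩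
  · have h1 : volume (U ∩ Ioc (a i₀) (a i)) ≤ (n : ℝ≥0∞) * ENNReal.ofReal α :=
      le_trans (measure_mono inter_subset_left) hUvol
    calc c i ≤ ((n : ℝ≥0∞) * ENNReal.ofReal α).toReal :=
          ENNReal.toReal_mono (ENNReal.mul_ne_top (by simp) ENNReal.ofReal_ne_top) h1
      _ = n * α := by
          rw [ENNReal.toReal_mul, ENNReal.toReal_ofReal hα.le]; simp
  · intro i j
    rcases le_total (a i) (a j) with h | h
    · obtain ⟨e1, e2⟩ := habs i j h
      rw [e1, e2]; exact hupper i j h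
    · obtain ⟨e1, e2⟩ := habs j i h
      rw [abs_sub_comm (c i) (c j), abs_sub_comm (a i) (a j), e1, e2]
      exact hupper j i h
  · intro i j
    rcases le_total (a i) (a j) with h | h
    · obtain ⟨e1, e2⟩ := habs i j h
      rw [e1, e2]; exact hlower i j h
    · obtain ⟨e1, e2⟩ := habs j i h
      rw [abs_sub_comm (c i) (c j), abs_sub_comm (a i) (a j), e1, e2]
      exact hlower j i h

lemma latt_shift (t P : ℝ) (q : ℤ) : latt (t + P * q) P = latt t P := by
  unfold latt
  ext z
  constructor
  · rintro ⟨k, rfl⟩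
    exact ⟨q + k, by push_cast; ring⟩
  · rintro ⟨k, rfl⟩
    exact ⟨k - q, by push_cast; ring⟩

lemma chain_select (L T : ℕ → ℝ) (hchain : ∀ ℓ, L (ℓ+1) ≤ T ℓ) (s : ℝ) :
    ∀ b : ℕ, L 0 ≤ s → s ≤ T b → ∃ ℓ, ℓ ≤ b ∧ L ℓ ≤ s ∧ s ≤ T ℓ := by
  intro b
  induction b with
  | zero => intro h0 hb; exact ⟨0, le_rfl, h0, hb⟩
  | succ b ih =>
    intro h0 hb
    rcases le_or_gt s (T b) with hc | hc
    · obtain ⟨ℓ, h1, h2, h3⟩ := ih h0 hc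
      exact ⟨ℓ, h1.trans (Nat.le_succ b), h2, h3⟩
    · exact ⟨b + 1, le_rfl, le_of_lt (lt_of_le_of_lt (hchain b) hc), hb⟩

/-- floor remainder facts -/
lemma floor_rem (c : ℝ) (hc : 0 < c) (z : ℝ) :
    0 ≤ z - c * ⌊z / c⌋ ∧ z - c * ⌊z / c⌋ < c := by
  constructor
  · have h1 := Int.floor_le (z / c)
    have h2 := (mul_le_mul_iff_of_pos_right hc).2 h1
    rw [div_mul_cancel₀ _ (ne_of_gt hc)] at h2
    nlinarith
  · have h1 := Int.lt_floor_add_one (z / c)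
    have h2 := (mul_lt_mul_iff_of_pos_right hc).2 h1
    rw [div_mul_cancel₀ _ (ne_of_gt hc)] at h2
    nlinarith

/-- fine triangle-wave coverage: pairs at distance `≤ 2h`. -/
lemma fine_cov (ε α x y : ℝ) (hε0 : 0 < ε) (hε2 : ε < 1/2) (hα : 1 < α)
    (m : ℕ) (hm : 12 * ((1/2+ε)*α) ≤ 2*(ε*α) * m)
    (hxy : x ≤ y) (hs : y - x ≤ 2*((1/2+ε)*α)) :
    ∃ r : ℕ, r < m ∧ min (y - x) α ≤
      |gad ((1/2+ε)*α) (4*((1/2+ε)*α)) 0 (r * (4*((1/2+ε)*α)/m)) x -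
       gad ((1/2+ε)*α) (4*((1/2+ε)*α)) 0 (r * (4*((1/2+ε)*α)/m)) y| := by
  have hα0 : 0 < α := by linarith
  set h : ℝ := (1/2+ε)*α with hh_def
  set ζ : ℝ := ε*α with hζ_def
  have hh : 0 < h := by rw [hh_def]; nlinarith
  have hζ : 0 < ζ := by rw [hζ_def]; nlinarith
  have hζh : ζ < h := by rw [hζ_def, hh_def]; nlinarith
  have hαh : α = 2*h - 2*ζ := by rw [hh_def, hζ_def]; ring
  have hm0 : 0 < (m : ℝ) := by nlinarith
  set δ : ℝ := 4*h/m with hδ_def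
  have hδ0 : 0 < δ := by rw [hδ_def]; positivity
  have hδm : δ * m = 4*h := by rw [hδ_def]; field_simp
  have hδζ : 3*δ ≤ 2*ζ := by
    have h1 : 3*δ = 12*h/m := by rw [hδ_def]; ring
    rw [h1, div_le_iff₀ hm0]
    linarith [hm]
  have h4h : 0 < 4*h := by linarith
  set k : ℤ := ⌊x / (4*h)⌋ with hk_def
  have hx₀ := floor_rem (4*h) h4h x
  rw [← hk_def] at hx₀
  set x₀ : ℝ := x - 4*h*k with hx₀_def
  set r : ℕ := ⌊x₀ / δ⌋₊ with hr_def
  have hx₀0 : 0 ≤ x₀ := hx₀.1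
  have hrm : r < m := by
    rw [hr_def, Nat.floor_lt (div_nonneg hx₀0 hδ0.le), div_lt_iff₀ hδ0]
    nlinarith [hx₀.2, hδm]
  have he1 : (r:ℝ) * δ ≤ x₀ := by
    have h1 := Nat.floor_le (div_nonneg hx₀0 hδ0.le)
    rw [← hr_def] at h1
    have h2 := (mul_le_mul_iff_of_pos_right hδ0).2 h1
    rwa [div_mul_cancel₀ _ (ne_of_gt hδ0)] at h2
  have he2 : x₀ < (r:ℝ) * δ + δ := by
    have h1 := Nat.lt_floor_add_one (x₀ / δ)
    rw [← hr_def] at h1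
    have h2 := (mul_lt_mul_iff_of_pos_right hδ0).2 h1
    rw [div_mul_cancel₀ _ (ne_of_gt hδ0)] at h2
    nlinarith
  set e : ℝ := x₀ - r * δ with he_def
  have he0 : 0 ≤ e := by rw [he_def]; linarith
  have heδ : e < δ := by rw [he_def]; linarith
  set t : ℝ := (r : ℝ) * δ with ht_def
  set s : ℝ := y - x with hs_def
  have hs0 : 0 ≤ s := by rw [hs_def]; linarith
  refine ⟨r, hrm, ?_⟩
  have htδ : (r : ℝ) * (4*h/m) = t := by rw [ht_def, hδ_def]
  rw [htδ]
  have hδh : δ ≤ h := by linarith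
  have hex : x = t + (4*h) * k + e := by rw [ht_def, he_def, hx₀_def]; ring
  have hIx : Metric.infDist x (latt t (4*h)) = min e (4*h - e) :=
    infDist_latt_eval h4h k he0 (by linarith) hex
  have hIx' : Metric.infDist x (latt t (4*h)) = e := by
    rw [hIx, min_eq_left (by linarith)]
  have hgx : gad h (4*h) 0 t x = e - h := by
    unfold gad
    rw [hIx', show e - 0/2 = e by ring, clampR_eval_mem _ _ he0 (by linarith)]
  set v : ℝ := e + s with hv_def
  have hey : y = t + (4*h) * k + v := by rw [hv_def, hs_def]; linarith [hex]
  have hv0 : 0 ≤ v := by rw [hv_def]; linarith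
  have hv4 : v ≤ 4*h := by rw [hv_def]; linarith
  have hIy : Metric.infDist y (latt t (4*h)) = min v (4*h - v) :=
    infDist_latt_eval h4h k hv0 hv4 hey
  rcases le_total v (2*h) with hcase | hcase
  · have hIy' : Metric.infDist y (latt t (4*h)) = v := by
      rw [hIy, min_eq_left (by linarith)]
    have hgy : gad h (4*h) 0 t y = v - h := by
      unfold gad
      rw [hIy', show v - 0/2 = v by ring, clampR_eval_mem _ _ hv0 (by linarith)]
    rw [hgx, hgy, show e - h - (v - h) = -s by rw [hv_def]; ring, abs_neg,
      abs_of_nonneg hs0]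
    exact min_le_left _ _
  · have hIy' : Metric.infDist y (latt t (4*h)) = 4*h - v := by
      rw [hIy, min_eq_right (by linarith)]
    have hgy : gad h (4*h) 0 t y = (4*h - v) - h := by
      unfold gad
      rw [hIy', show 4*h - v - 0/2 = 4*h - v by ring,
        clampR_eval_mem _ _ (by linarith) (by linarith)]
    rw [hgx, hgy, show e - h - (4*h - v - h) = 2*e + s - 4*h by rw [hv_def]; ring]
    have hneg : 2*e + s - 4*h ≤ 0 := by
      rw [hs_def] at hs ⊢
      linarith
    rw [abs_of_nonpos hneg]
    refine le_trans (min_le_right _ _) ?_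
    rw [hs_def] at hs ⊢
    linarith [hδζ, heδ, hαh]

/-- trapezoid wave coverage -/
lemma trap_cov (ε α x y : ℝ) (hε0 : 0 < ε) (hε2 : ε < 1/2) (hα : 1 < α)
    (B g : ℝ) (p : ℕ)
    (hB : 2*((1/2+ε)*α) ≤ B)
    (hg0 : 0 < g) (hgP : g * p = 2*B + 4*((1/2+ε)*α))
    (hgB : g ≤ B/2)
    (hxy : x ≤ y)
    (hlo : 2*((1/2+ε)*α) - 2*(ε*α) + g ≤ y - x)
    (hhi : y - x ≤ 2*B + 2*((1/2+ε)*α) + 2*(ε*α) - g) :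
    ∃ r : ℕ, r < p ∧ α ≤
      gad ((1/2+ε)*α) (2*B + 4*((1/2+ε)*α)) B ((r:ℝ) * g) y -
      gad ((1/2+ε)*α) (2*B + 4*((1/2+ε)*α)) B ((r:ℝ) * g) x := by
  have hα0 : 0 < α := by linarith
  set h : ℝ := (1/2+ε)*α with hh_def
  set ζ : ℝ := ε*α with hζ_def
  have hh : 0 < h := by rw [hh_def]; nlinarith
  have hζ : 0 < ζ := by rw [hζ_def]; nlinarith
  have hζh : 2*ζ < h := by rw [hζ_def, hh_def]; nlinarith
  have hαh : α = 2*h - 2*ζ := by rw [hh_def, hζ_def]; ring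
  set P : ℝ := 2*B + 4*h with hP_def
  have hP0 : 0 < P := by rw [hP_def]; linarith
  have hp0 : 0 < (p:ℝ) := by
    by_contra hcon
    push_neg at hcon
    have hp00 : (p:ℝ) = 0 := le_antisymm hcon (by positivity)
    rw [hp00, mul_zero] at hgP
    nlinarith
  set W : ℝ := B/2 + ζ with hW_def
  set R : ℝ := B/2 + 2*h - ζ with hR_def
  set s : ℝ := y - x with hs_def
  set ρ : ℝ := max (R - s) (-W) with hρ_def
  have hρW : ρ ≤ W - g := by
    rw [hρ_def]
    apply max_le
    · rw [hR_def, hW_def]; linarith [hlo]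
    · rw [hW_def]; linarith
  have hρlo : -W ≤ ρ := le_max_right _ _
  set tstar : ℝ := x - ρ with htstar_def
  set r' : ℤ := ⌊tstar / g⌋ with hr'_def
  have hrem := floor_rem g hg0 tstar
  rw [← hr'_def] at hrem
  set e : ℝ := tstar - g * r' with he_def
  have he0 : 0 ≤ e := hrem.1
  have heg : e < g := hrem.2
  set r : ℕ := (r' % p).toNat with hr_def
  have hppos : 0 < p := by exact_mod_cast hp0
  have hpz : (p : ℤ) ≠ 0 := by exact_mod_cast ne_of_gt hppos
  have hmod0 : 0 ≤ r' % p := Int.emod_nonneg r' hpz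
  have hrp : r < p := by
    rw [hr_def]
    have h1 : r' % p < p := Int.emod_lt_of_pos r' (by exact_mod_cast hppos)
    omega
  have hdm : (p:ℤ) * (r' / p) + r' % p = r' := Int.mul_ediv_add_emod r' p
  have hcast : (p : ℝ) * ((r' / p : ℤ) : ℝ) + ((r' % p : ℤ) : ℝ) = (r' : ℝ) := by
    exact_mod_cast congrArg (Int.cast : ℤ → ℝ) hdm
  have hrcastZ : ((r : ℕ) : ℤ) = r' % p := Int.toNat_of_nonneg hmod0
  have hrcast : (r : ℝ) = ((r' % p : ℤ) : ℝ) := by exact_mod_cast congrArg (Int.cast : ℤ → ℝ) hrcastZ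
  have hrr' : (r:ℝ) * g = (r':ℝ) * g - P * ((r' / p : ℤ) : ℝ) := by
    rw [hrcast, ← hgP]
    linear_combination g * hcast
  have hlatt : latt ((r:ℝ) * g) P = latt ((r':ℝ) * g) P := by
    have hform : ((r':ℝ) * g) = (r:ℝ)*g + P * ((r' / p : ℤ) : ℝ) := by rw [hrr']; ring
    rw [hform, latt_shift]
  refine ⟨r, hrp, ?_⟩
  set t : ℝ := (r' : ℝ) * g with ht_def
  have hxt : x - t = ρ + e := by rw [ht_def, he_def, htstar_def]; ring
  have hIx : Metric.infDist x (latt t P) ≤ W := by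
    have h1 := infDist_latt_le t P x 0
    have h2 : x - (t + P * ((0:ℤ):ℝ)) = ρ + e := by
      push_cast
      linarith [hxt]
    rw [h2] at h1
    refine h1.trans ?_
    rw [abs_le]
    constructor
    · linarith
    · linarith
  have hgadx : gad h P B t x ≤ ζ - h := by
    unfold gad
    have h1 : Metric.infDist x (latt t P) - B/2 ≤ ζ := by rw [hW_def] at hIx; linarith
    have h2 : clampR (2*h) (Metric.infDist x (latt t P) - B/2) ≤ clampR (2*h) ζ :=
      clampR_mono _ h1
    rw [clampR_eval_mem _ _ hζ.le (by linarith)] at h2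
    linarith
  set v : ℝ := s + ρ + e with hv_def
  have hyt : y = t + P * ((0:ℤ):ℝ) + v := by
    push_cast
    rw [hv_def, hs_def]
    linarith [hxt]
  have hRW : R + g ≤ P - R := by rw [hR_def, hP_def]; linarith
  have hvlo : R ≤ v := by
    rw [hv_def]
    rcases max_cases (R - s) (-W) with ⟨hmax, _⟩ | ⟨hmax, hge⟩
    · rw [hρ_def, hmax]; linarith
    · rw [hρ_def, hmax]; linarith
  have hvhi : v ≤ P - R := by
    rw [hv_def]
    rcases max_cases (R - s) (-W) with ⟨hmax, _⟩ | ⟨hmax, hge⟩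
    · rw [hρ_def, hmax]; linarith
    · rw [hρ_def, hmax]
      have hup : s - W + g ≤ P - R := by
        rw [hR_def, hP_def, hW_def]
        linarith [hhi]
      linarith
  have hR0 : 0 ≤ R := by rw [hR_def]; linarith
  have hIy : Metric.infDist y (latt t P) = min v (P - v) :=
    infDist_latt_eval hP0 0 (le_trans hR0 hvlo) (by linarith) hyt
  have hIy' : R ≤ Metric.infDist y (latt t P) := by
    rw [hIy]
    exact le_min hvlo (by linarith)
  have hgady : h - ζ ≤ gad h P B t y := by
    unfold gad
    have h1 : 2*h - ζ ≤ Metric.infDist y (latt t P) - B/2 := by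
      rw [hR_def] at hIy'; linarith
    have h2 : clampR (2*h) (2*h - ζ) ≤ clampR (2*h) (Metric.infDist y (latt t P) - B/2) :=
      clampR_mono _ h1
    rw [clampR_eval_mem _ _ (by linarith) (by linarith)] at h2
    linarith
  have heqx : gad h P B ((r:ℝ)*g) x = gad h P B t x := by
    unfold gad; rw [hlatt]
  have heqy : gad h P B ((r:ℝ)*g) y = gad h P B t y := by
    unfold gad; rw [hlatt]
  rw [heqx, heqy, hαh]
  linarith

lemma nat_floor_rem (c : ℝ) (hc : 0 < c) (z : ℝ) (hz : 0 ≤ z) :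
    (⌊z / c⌋₊ : ℝ) * c ≤ z ∧ z < (⌊z / c⌋₊ : ℝ) * c + c := by
  have h1 := Nat.floor_le (div_nonneg hz hc.le)
  have h2 := Nat.lt_floor_add_one (z / c)
  constructor
  · have := (mul_le_mul_iff_of_pos_right hc).2 h1
    rwa [div_mul_cancel₀ _ (ne_of_gt hc)] at this
  · have := (mul_lt_mul_iff_of_pos_right hc).2 h2
    rw [div_mul_cancel₀ _ (ne_of_gt hc)] at this
    nlinarith

/-- the net-window construction, for small instances -/
lemma core_net (ε α M : ℝ) (hε0 : 0 < ε) (hε2 : ε < 1/2) (hα : 1 < α) (hM0 : 0 ≤ M)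
    (K : ℕ) (hK : M < 2*(ε*α) * K) :
    ∃ Φ : ℕ → ℝ → ℝ, (∀ k z, |Φ k z| ≤ (1/2+ε)*α) ∧
      (∀ k z z', |Φ k z - Φ k z'| ≤ |z - z'|) ∧
      (∀ x y, 0 ≤ x → x ≤ y → y ≤ M →
        ∃ k, k < K ∧ min (y - x) α ≤ |Φ k x - Φ k y|) := by
  have hα0 : 0 < α := by linarith
  set h : ℝ := (1/2+ε)*α with hh_def
  set ζ : ℝ := ε*α with hζ_def
  have hh : 0 < h := by rw [hh_def]; nlinarith
  have hζ : 0 < ζ := by rw [hζ_def]; nlinarith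
  have hζh : 2*ζ < 2*h := by rw [hζ_def, hh_def]; nlinarith
  have hαh : α = 2*h - 2*ζ := by rw [hh_def, hζ_def]; ring
  set P : ℝ := 2*M + 8*h with hP_def
  have hP0 : 0 < P := by rw [hP_def]; linarith
  refine ⟨fun k z => gad h P 0 ((k:ℝ) * (2*ζ)) z, fun k z => gad_bound _ _ _ _ _ hh.le,
    fun k z z' => gad_lip _ _ _ _ _ _, ?_⟩
  intro x y hx0 hxy hyM
  set k : ℕ := ⌊x / (2*ζ)⌋₊ with hk_def
  have hrem := nat_floor_rem (2*ζ) (by linarith) x hx0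
  rw [← hk_def] at hrem
  set u : ℝ := (k:ℝ) * (2*ζ) with hu_def
  have hkK : k < K := by
    rw [hk_def, Nat.floor_lt (div_nonneg hx0 (by linarith))]
    rw [div_lt_iff₀ (by linarith)]
    calc x ≤ M := le_trans hxy hyM
      _ < 2*(ζ) * K := by rw [hζ_def] at *; exact hK
      _ = (K:ℝ) * (2*ζ) := by ring
  refine ⟨k, hkK, ?_⟩
  show min (y - x) α ≤ |gad h P 0 u x - gad h P 0 u y|
  have hu0 : 0 ≤ u := by rw [hu_def]; positivity
  -- eval at x
  have hvx0 : 0 ≤ x - u := by rw [hu_def]; linarith [hrem.1]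
  have hvx2 : x - u < 2*ζ := by rw [hu_def]; linarith [hrem.2]
  have hex : x = u + P * ((0:ℤ):ℝ) + (x - u) := by push_cast; ring
  have hIx : Metric.infDist x (latt u P) = min (x-u) (P - (x-u)) :=
    infDist_latt_eval hP0 0 hvx0 (by rw [hP_def]; linarith) hex
  have hIx' : Metric.infDist x (latt u P) = x - u := by
    rw [hIx, min_eq_left (by rw [hP_def]; linarith)]
  have hgx : gad h P 0 u x = (x - u) - h := by
    unfold gad
    rw [hIx', show x - u - 0/2 = x - u by ring, clampR_eval_mem _ _ hvx0 (by linarith)]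
  -- eval at y
  have hvy0 : 0 ≤ y - u := by linarith
  have hvyM : y - u ≤ M := by linarith
  have hey : y = u + P * ((0:ℤ):ℝ) + (y - u) := by push_cast; ring
  have hIy : Metric.infDist y (latt u P) = min (y-u) (P - (y-u)) :=
    infDist_latt_eval hP0 0 hvy0 (by rw [hP_def]; linarith) hey
  have hIy' : Metric.infDist y (latt u P) = y - u := by
    rw [hIy, min_eq_left (by rw [hP_def]; linarith)]
  rcases le_total (y - u) (2*h) with hcase | hcase
  · have hgy : gad h P 0 u y = (y - u) - h := by
      unfold gad
      rw [hIy', show y - u - 0/2 = y - u by ring, clampR_eval_mem _ _ hvy0 (by linarith)]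
    rw [hgx, hgy, show x - u - h - (y - u - h) = -(y-x) by ring, abs_neg,
      abs_of_nonneg (by linarith)]
    exact min_le_left _ _
  · have hgy : gad h P 0 u y = h := by
      unfold gad
      rw [hIy', show y - u - 0/2 = y - u by ring, clampR_eval_ge _ _ (by linarith) hcase]
      ring
    rw [hgx, hgy, show x - u - h - h = -(2*h - (x-u)) by ring, abs_neg,
      abs_of_nonneg (by linarith)]
    refine le_trans (min_le_right _ _) ?_
    linarith

/-- the multi-scale wave construction, for large instances -/
lemma core_wave (ε α M : ℝ) (hε0 : 0 < ε) (hε2 : ε < 1/2) (hα : 1 < α) (hM0 : 0 ≤ M)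
    (b m p₀ : ℕ) (hb : 1 ≤ b)
    (hm : 12*((1/2+ε)*α) ≤ 2*(ε*α)*m) (hp₀ : 8*((1/2+ε)*α) ≤ 2*(ε*α)*p₀)
    (hMb : M ≤ 2^b * α) :
    ∃ Φ : ℕ → ℝ → ℝ, (∀ k z, |Φ k z| ≤ (1/2+ε)*α) ∧
      (∀ k z z', |Φ k z - Φ k z'| ≤ |z - z'|) ∧
      (∀ x y, 0 ≤ x → x ≤ y → y ≤ M →
        ∃ k, k < m + p₀ + 7*b ∧ min (y - x) α ≤ |Φ k x - Φ k y|) := by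
  have hα0 : 0 < α := by linarith
  set h : ℝ := (1/2+ε)*α with hh_def
  set ζ : ℝ := ε*α with hζ_def
  have hh : 0 < h := by rw [hh_def]; nlinarith
  have hζ : 0 < ζ := by rw [hζ_def]; nlinarith
  have hζh : 2*ζ < h := by rw [hζ_def, hh_def]; nlinarith
  have hαh : α = 2*h - 2*ζ := by rw [hh_def, hζ_def]; ring
  have hα2h : α ≤ 2*h := by linarith
  have hm0 : 0 < (m:ℝ) := by nlinarith
  have hp₀0 : 0 < (p₀:ℝ) := by nlinarith
  have hp₀z : (p₀:ℝ) ≠ 0 := ne_of_gt hp₀0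
  have hg₀2ζ : 8*h/p₀ ≤ 2*ζ := by
    rw [div_le_iff₀ hp₀0]; nlinarith
  have hg₀0 : 0 < 8*h/p₀ := by positivity
  -- scale data (sc k = scale of index k; only used for k ≥ m)
  set sc : ℕ → ℕ := fun k => if k < m + p₀ then 0 else (k - m - p₀)/7 + 1 with hsc_def
  set BB : ℕ → ℝ := fun k => if k < m then 0 else 2*h*2^(sc k) with hBB_def
  set PP : ℕ → ℝ := fun k => if k < m then 4*h else 2*(2*h*2^(sc k)) + 4*h with hPP_def
  set gg : ℕ → ℝ := fun k => if k < m + p₀ then 8*h/p₀ else (2*(2*h*2^(sc k)) + 4*h)/7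
    with hgg_def
  set ph : ℕ → ℕ := fun k => if k < m + p₀ then k - m else (k - m - p₀) % 7 with hph_def
  set tt : ℕ → ℝ := fun k => if k < m then (k:ℝ)*(4*h/m) else (ph k : ℝ) * gg k with htt_def
  refine ⟨fun k z => gad h (PP k) (BB k) (tt k) z,
    fun k z => gad_bound _ _ _ _ _ hh.le, fun k z z' => gad_lip _ _ _ _ _ _, ?_⟩
  intro x y hx0 hxy hyM
  rcases le_or_gt (y - x) (2*h) with hsmall | hbig
  · -- fine case
    obtain ⟨r, hrm, hcov⟩ := fine_cov ε α x y hε0 hε2 hα m hm hxy hsmall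
    refine ⟨r, by omega, ?_⟩
    show min (y-x) α ≤ |gad h (PP r) (BB r) (tt r) x - gad h (PP r) (BB r) (tt r) y|
    have e1 : PP r = 4*h := by rw [hPP_def]; simp [hrm]
    have e2 : BB r = 0 := by rw [hBB_def]; simp [hrm]
    have e3 : tt r = (r:ℝ)*(4*h/m) := by rw [htt_def]; simp [hrm]
    rw [e1, e2, e3]
    exact hcov
  · -- trapezoid case
    set s : ℝ := y - x with hs_def
    set gf : ℕ → ℝ := fun ℓ => if ℓ = 0 then 8*h/p₀ else (2*(2*h*2^ℓ) + 4*h)/7 with hgf_def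
    set Lf : ℕ → ℝ := fun ℓ => if ℓ = 0 then 2*h else 2*h - 2*ζ + gf ℓ with hLf_def
    set Tf : ℕ → ℝ := fun ℓ => if ℓ = 0 then 6*h else (2*(2*h*2^ℓ) + 4*h) - 2*h + 2*ζ - gf ℓ
      with hTf_def
    have hgfpos : ∀ ℓ, 0 < gf ℓ := by
      intro ℓ
      rw [hgf_def]
      rcases Nat.eq_zero_or_pos ℓ with h0 | h0
      · simp [h0]; exact hg₀0
      · have : ℓ ≠ 0 := by omega
        simp only [this, if_false]
        positivity
    have hchain : ∀ ℓ, Lf (ℓ+1) ≤ Tf ℓ := by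
      intro ℓ
      have hpow1 : (1:ℝ) ≤ 2^ℓ := one_le_pow₀ (by norm_num)
      rcases Nat.eq_zero_or_pos ℓ with h0 | h0
      · subst h0
        rw [hLf_def, hTf_def, hgf_def]
        norm_num
        linarith
      · have hℓ : ℓ ≠ 0 := by omega
        rw [hLf_def, hTf_def, hgf_def]
        simp only [Nat.succ_ne_zero, hℓ, if_false, pow_succ]
        nlinarith
    have hL0 : Lf 0 ≤ s := by rw [hLf_def]; simp; linarith
    have hTb : s ≤ Tf b := by
      have hb0 : b ≠ 0 := by omega
      have hpow1 : (1:ℝ) ≤ 2^b := one_le_pow₀ (by norm_num)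
      rw [hTf_def, hgf_def]
      simp only [hb0, if_false]
      have hMs : s ≤ 2^b * α := by rw [hs_def]; linarith
      nlinarith
    obtain ⟨ℓ, hℓb, hLs, hsT⟩ := chain_select Lf Tf hchain s b hL0 hTb
    rcases Nat.eq_zero_or_pos ℓ with h0 | h0
    · -- scale 0
      subst h0
      have hcov := trap_cov ε α x y hε0 hε2 hα (2*h*2^(0:ℕ)) (8*h/p₀) p₀
        (by norm_num; exact hh_def.ge) hg₀0
        (by rw [hh_def]; field_simp; ring)
        (by norm_num; linarith)
        hxy
        (by rw [hLf_def] at hLs; simp at hLs; norm_num; linarith)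
        (by rw [hTf_def] at hsT; simp at hsT; norm_num; linarith)
      obtain ⟨r, hrp, hcov⟩ := hcov
      have hp₀n : 0 < p₀ := by exact_mod_cast hp₀0
      refine ⟨m + r, by omega, ?_⟩
      show min (y-x) α ≤ |gad h (PP (m+r)) (BB (m+r)) (tt (m+r)) x -
        gad h (PP (m+r)) (BB (m+r)) (tt (m+r)) y|
      have hk1 : ¬ (m + r < m) := by omega
      have hk2 : m + r < m + p₀ := by omega
      have hsc : sc (m+r) = 0 := by rw [hsc_def]; simp [hk2]
      have e1 : PP (m+r) = 2*(2*h*2^(0:ℕ)) + 4*h := by rw [hPP_def]; simp only [hk1, if_false, hsc]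
      have e2 : BB (m+r) = 2*h*2^(0:ℕ) := by rw [hBB_def]; simp only [hk1, if_false, hsc]
      have e3 : tt (m+r) = (r:ℝ) * (8*h/p₀) := by
        rw [htt_def, hph_def, hgg_def]
        simp only [hk1, if_false, hk2, if_true]
        congr 1
        · congr 1; omega
      rw [e1, e2, e3]
      have : α ≤ gad h (2*(2*h*2^(0:ℕ)) + 4*h) (2*h*2^(0:ℕ)) ((r:ℝ)*(8*h/p₀)) y -
          gad h (2*(2*h*2^(0:ℕ)) + 4*h) (2*h*2^(0:ℕ)) ((r:ℝ)*(8*h/p₀)) x := hcov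
      refine le_trans (min_le_right _ _) ?_
      rw [abs_sub_comm]
      exact le_trans this (le_abs_self _)
    · -- scale ℓ ≥ 1
      have hℓ0 : ℓ ≠ 0 := by omega
      have hpow2 : (2:ℝ) ≤ 2^ℓ := by
        calc (2:ℝ) = 2^1 := by norm_num
        _ ≤ 2^ℓ := by
            apply pow_le_pow_right₀ (by norm_num) h0
      have hgfℓ : gf ℓ = (2*(2*h*2^ℓ) + 4*h)/7 := by rw [hgf_def]; simp [hℓ0]
      have hcov := trap_cov ε α x y hε0 hε2 hα (2*h*2^ℓ) ((2*(2*h*2^ℓ) + 4*h)/7) 7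
        (by nlinarith)
        (by positivity)
        (by rw [hh_def]; field_simp; ring)
        (by nlinarith)
        hxy
        (by rw [hLf_def] at hLs; simp only [hℓ0, if_false, hgfℓ] at hLs; linarith)
        (by rw [hTf_def] at hsT; simp only [hℓ0, if_false, hgfℓ] at hsT; linarith)
      obtain ⟨r, hrp, hcov⟩ := hcov
      refine ⟨m + p₀ + 7*(ℓ-1) + r, by omega, ?_⟩
      set k := m + p₀ + 7*(ℓ-1) + r with hk_def
      show min (y-x) α ≤ |gad h (PP k) (BB k) (tt k) x - gad h (PP k) (BB k) (tt k) y|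
      have hk1 : ¬ (k < m) := by omega
      have hk2 : ¬ (k < m + p₀) := by omega
      have hkd : k - m - p₀ = 7*(ℓ-1) + r := by omega
      have hdiv : (k - m - p₀)/7 = ℓ - 1 := by
        rw [hkd, Nat.add_comm, Nat.add_mul_div_left _ _ (by norm_num : 0 < 7),
          Nat.div_eq_of_lt hrp]
        omega
      have hmod : (k - m - p₀) % 7 = r := by
        rw [hkd, Nat.add_comm, Nat.add_mul_mod_self_left, Nat.mod_eq_of_lt hrp]
      have hsck : sc k = ℓ := by
        rw [hsc_def]; simp only [hk2, if_false, hdiv]; omega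
      have e1 : PP k = 2*(2*h*2^ℓ) + 4*h := by
        rw [hPP_def]; simp only [hk1, if_false, hsck]
      have e2 : BB k = 2*h*2^ℓ := by
        rw [hBB_def]; simp only [hk1, if_false, hsck]
      have e3 : tt k = (r:ℝ) * ((2*(2*h*2^ℓ) + 4*h)/7) := by
        rw [htt_def, hph_def, hgg_def]
        simp only [hk1, hk2, if_false, hsck, hmod]
      rw [e1, e2, e3]
      refine le_trans (min_le_right _ _) ?_
      rw [abs_sub_comm]
      exact le_trans hcov (le_abs_self _)

/-- per-coordinate family -/
lemma per_coord (ε α : ℝ) (hε0 : 0 < ε) (hε2 : ε < 1/2) (hα : 1 < α)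
    (n : ℕ) (hn : 2 ≤ n) (K : ℕ)
    (hcase : (n:ℝ)*α < 2*(ε*α)*K ∨
      ∃ b m p₀ : ℕ, 1 ≤ b ∧ m + p₀ + 7*b ≤ K ∧
        12*((1/2+ε)*α) ≤ 2*(ε*α)*m ∧ 8*((1/2+ε)*α) ≤ 2*(ε*α)*p₀ ∧ (n:ℝ)*α ≤ 2^b*α)
    (f : Fin n → ℝ) :
    ∃ Ψ : ℕ → Fin n → ℝ,
      (∀ k i, |Ψ k i| ≤ (1/2+ε)*α) ∧
      (∀ k i j, |Ψ k i - Ψ k j| ≤ |f i - f j|) ∧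
      (∀ i j, ∃ k, k < K ∧ min |f i - f j| α ≤ |Ψ k i - Ψ k j|) := by
  have hα0 : 0 < α := by linarith
  have hM0 : (0:ℝ) ≤ n*α := by positivity
  obtain ⟨c, hcb, hcu, hcl⟩ := compression α hα0 n (by omega) f
  have hcore : ∃ Φ : ℕ → ℝ → ℝ, (∀ k z, |Φ k z| ≤ (1/2+ε)*α) ∧
      (∀ k z z', |Φ k z - Φ k z'| ≤ |z - z'|) ∧
      (∀ x y, 0 ≤ x → x ≤ y → y ≤ (n:ℝ)*α →
        ∃ k, k < K ∧ min (y - x) α ≤ |Φ k x - Φ k y|) := by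
    rcases hcase with hnet | ⟨b, m, p₀, hb1, hcount, hm, hp₀, hMb⟩
    · exact core_net ε α (n*α) hε0 hε2 hα hM0 K hnet
    · obtain ⟨Φ, h1, h2, h3⟩ := core_wave ε α (n*α) hε0 hε2 hα hM0 b m p₀ hb1 hm hp₀ hMb
      exact ⟨Φ, h1, h2, fun x y hx hxy hyM => by
        obtain ⟨k, hk, hc⟩ := h3 x y hx hxy hyM
        exact ⟨k, by omega, hc⟩⟩
  obtain ⟨Φ, hΦb, hΦl, hΦc⟩ := hcore
  refine ⟨fun k i => Φ k (c i), fun k i => hΦb k (c i),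
    fun k i j => le_trans (hΦl k (c i) (c j)) (hcu i j), ?_⟩
  intro i j
  rcases le_total (c i) (c j) with hij | hij
  · obtain ⟨k, hk, hcov⟩ := hΦc (c i) (c j) (hcb i).1 hij (hcb j).2
    have habs : |c i - c j| = c j - c i := by
      rw [abs_sub_comm]; exact abs_of_nonneg (by linarith)
    refine ⟨k, hk, ?_⟩
    show min |f i - f j| α ≤ |Φ k (c i) - Φ k (c j)|
    refine le_trans (le_min (le_trans (hcl i j) (le_of_eq habs)) (min_le_right _ _)) hcov
  · obtain ⟨k, hk, hcov⟩ := hΦc (c j) (c i) (hcb j).1 hij (hcb i).2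
    have habs : |c i - c j| = c i - c j := abs_of_nonneg (by linarith)
    rw [abs_sub_comm] at hcov
    refine ⟨k, hk, ?_⟩
    show min |f i - f j| α ≤ |Φ k (c i) - Φ k (c j)|
    refine le_trans (le_min (le_trans (hcl i j) (le_of_eq habs)) (min_le_right _ _)) hcov

/-- Every `ℓ∞` Closest-Pair instance `v : Fin n → Fin d → ℝ` can be replaced
by an instance `w` of dimension `D ≤ 4d⌈1/ε⌉⌈log₂ n⌉` with all coordinates in
`[-(0.5+ε)α, (0.5+ε)α]`, preserving for every pair both the condition `‖·‖_∞ ≤ 1` and the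
condition `‖·‖_∞ ≥ α`.  (Here `‖·‖` is the sup norm on a Pi type.) -/
theorem stmt_5 (ε α : ℝ) (hε : ε ∈ Set.Ioo (0 : ℝ) (1 / 2)) (hα : 1 < α)
    (n d : ℕ) (hn : 2 ≤ n) (hd : 0 < d)
    (v : Fin n → Fin d → ℝ) :
    ∃ D : ℕ, 0 < D ∧ D ≤ 4 * d * ⌈1 / ε⌉₊ * ⌈Real.logb 2 n⌉₊ ∧
      ∃ w : Fin n → Fin D → ℝ,
        (∀ i x, w i x ∈ Set.Icc (-((0.5 + ε) * α)) ((0.5 + ε) * α)) ∧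
        (∀ i j, (‖w i - w j‖ ≤ 1 ↔ ‖v i - v j‖ ≤ 1) ∧
          (α ≤ ‖w i - w j‖ ↔ α ≤ ‖v i - v j‖)) := by
  obtain ⟨hε0, hε2⟩ := hε
  have hα0 : 0 < α := by linarith
  set a : ℕ := ⌈1/ε⌉₊ with ha_def
  set b : ℕ := ⌈Real.logb 2 n⌉₊ with hb_def
  -- basic numeric facts
  have ha3 : 3 ≤ a := by
    rw [ha_def]
    have h2 : (2:ℝ) < 1/ε := by
      rw [lt_div_iff₀ hε0]; linarith
    have := Nat.lt_ceil.mpr (by exact_mod_cast h2 : ((2:ℕ):ℝ) < 1/ε)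
    omega
  have hεa : 1 ≤ ε * a := by
    have h1 : (1/ε : ℝ) ≤ a := by rw [ha_def]; exact Nat.le_ceil _
    calc (1:ℝ) = ε * (1/ε) := by field_simp
      _ ≤ ε * a := by
          apply mul_le_mul_of_nonneg_left h1 hε0.le
  have hn1 : (1:ℝ) < n := by exact_mod_cast hn
  have hb1 : 1 ≤ b := by
    rw [hb_def]
    have : 0 < Real.logb 2 n := Real.logb_pos (by norm_num) hn1
    exact Nat.one_le_ceil_iff.mpr this
  have hn2b : (n:ℝ) ≤ 2^b := by
    have h1 : Real.logb 2 n ≤ (b:ℝ) := by rw [hb_def]; exact Nat.le_ceil _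
    have h2 : (n:ℝ) = (2:ℝ) ^ (Real.logb 2 n) :=
      (Real.rpow_logb (by norm_num) (by norm_num) (by linarith)).symm
    calc (n:ℝ) = (2:ℝ) ^ (Real.logb 2 n) := h2
      _ ≤ (2:ℝ) ^ ((b:ℝ)) := by
          apply Real.rpow_le_rpow_of_exponent_le (by norm_num) h1
      _ = (2:ℝ)^b := by rw [Real.rpow_natCast]
  set K : ℕ := 4*a*b with hK_def
  have hK0 : 0 < K := by rw [hK_def]; positivity
  -- the case condition
  have hcase : (n:ℝ)*α < 2*(ε*α)*K ∨
      ∃ b' m p₀ : ℕ, 1 ≤ b' ∧ m + p₀ + 7*b' ≤ K ∧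
        12*((1/2+ε)*α) ≤ 2*(ε*α)*m ∧ 8*((1/2+ε)*α) ≤ 2*(ε*α)*p₀ ∧ (n:ℝ)*α ≤ 2^b'*α := by
    rcases lt_or_ge n (8*b) with hsmall | hlarge
    · left
      have hnr : (n:ℝ) ≤ 8*b - 1 := by
        have : n + 1 ≤ 8*b := by omega
        have := (Nat.cast_le (α := ℝ)).mpr this
        push_cast at this
        linarith
      have hbr : (1:ℝ) ≤ b := by exact_mod_cast hb1
      have hKr : (K:ℝ) = 4*a*b := by rw [hK_def]; push_cast; ring
      rw [hKr]
      have h8 : (8:ℝ)*b*(ε*a) ≥ 8*b := by nlinarith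
      nlinarith
    · right
      refine ⟨b, 3*a+7, 2*a+5, hb1, ?_, ?_, ?_, ?_⟩
      · -- counting
        have hb6 : 6 ≤ b := by
          by_contra hcon
          push_neg at hcon
          have hnnat : n ≤ 2^b := by exact_mod_cast hn2b
          interval_cases b <;> norm_num at hnnat <;> omega
        rw [hK_def]
        have h1 : a*6 ≤ a*b := Nat.mul_le_mul_left a hb6
        have h2 : 3*b ≤ a*b := Nat.mul_le_mul_right b ha3
        -- 3a+7 + 2a+5 + 7b = 5a + 7b + 12 ≤ 4ab
        nlinarith [h1, h2, ha3, hb6]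
      · push_cast; nlinarith
      · push_cast; nlinarith
      · have : (n:ℝ)*α ≤ (2^b:ℝ)*α := by
          apply mul_le_mul_of_nonneg_right hn2b hα0.le
        exact_mod_cast this
  -- per-coordinate families
  have hper := fun μ : Fin d => per_coord ε α hε0 hε2 hα n hn K hcase (fun i => v i μ)
  choose Ψ hΨb hΨl hΨc using hper
  -- assemble
  refine ⟨d*K, by positivity, ?_, ?_⟩
  · rw [hK_def]; exact le_of_eq (by ring)
  · have hdec : ∀ x : Fin (d*K), x.val / K < d := by
      intro x
      have hx : (x:ℕ) < K*d := by rw [Nat.mul_comm K d]; exact x.isLt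
      exact Nat.div_lt_of_lt_mul hx
    set w : Fin n → Fin (d*K) → ℝ :=
      fun i x => Ψ ⟨x.val / K, hdec x⟩ (x.val % K) i with hw_def
    have hxlt : ∀ (μ : Fin d) (k : ℕ), k < K → μ.val * K + k < d*K := by
      intro μ k hk
      have h3 : (μ.val+1)*K ≤ d*K := Nat.mul_le_mul_right K μ.isLt
      rw [Nat.succ_mul] at h3
      omega
    have henc : ∀ (μ : Fin d) (k : ℕ) (hk : k < K) (hx : μ.val * K + k < d*K) (i : Fin n),
        w i ⟨μ.val * K + k, hx⟩ = Ψ μ k i := by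
      intro μ k hk hx i
      have h1 : (μ.val * K + k) / K = μ.val := by
        rw [Nat.add_comm, Nat.add_mul_div_right _ _ hK0, Nat.div_eq_of_lt hk]
        omega
      have h2 : (μ.val * K + k) % K = k := by
        rw [Nat.add_comm, Nat.add_mul_mod_self_right, Nat.mod_eq_of_lt hk]
      rw [hw_def]
      simp only
      have h1' : (⟨(μ.val*K+k)/K, hdec ⟨μ.val*K+k, hx⟩⟩ : Fin d) = μ := Fin.ext h1
      rw [h1', h2]
    refine ⟨w, ?_, ?_⟩
    · intro i x
      rw [Set.mem_Icc]
      have := hΨb ⟨x.val / K, hdec x⟩ (x.val % K) i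
      rw [show (0.5 : ℝ) + ε = 1/2 + ε by norm_num]
      rw [abs_le] at this
      exact ⟨this.1, this.2⟩
    · intro i j
      -- coordinate distance facts
      have hwle : ∀ x : Fin (d*K), |(w i - w j) x| ≤ |v i (⟨x.val / K, hdec x⟩) - v j (⟨x.val / K, hdec x⟩)| := by
        intro x
        have := hΨl ⟨x.val / K, hdec x⟩ (x.val % K) i j
        simpa [hw_def] using this
      have hvnorm : ∀ μ : Fin d, |v i μ - v j μ| ≤ ‖v i - v j‖ := by
        intro μ
        have := norm_le_pi_norm (v i - v j) μ
        simpa [Real.norm_eq_abs] using this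
      have hwnorm : ∀ x : Fin (d*K), |(w i - w j) x| ≤ ‖w i - w j‖ := by
        intro x
        have := norm_le_pi_norm (w i - w j) x
        simpa [Real.norm_eq_abs] using this
      have hcov : ∀ μ : Fin d, ∃ x : Fin (d*K),
          min |v i μ - v j μ| α ≤ |(w i - w j) x| := by
        intro μ
        obtain ⟨k, hk, hc⟩ := hΨc μ i j
        refine ⟨⟨μ.val * K + k, hxlt μ k hk⟩, ?_⟩
        rw [Pi.sub_apply, henc μ k hk _ i, henc μ k hk _ j]
        exact hc
      constructor
      · constructor
        · -- ‖w‖ ≤ 1 → ‖v‖ ≤ 1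
          intro hw1
          by_contra hv1
          push_neg at hv1
          have : ∃ μ : Fin d, 1 < |v i μ - v j μ| := by
            by_contra hall
            push_neg at hall
            have : ‖v i - v j‖ ≤ 1 := by
              apply (pi_norm_le_iff_of_nonneg zero_le_one).mpr
              intro μ
              rw [Real.norm_eq_abs, Pi.sub_apply]
              exact hall μ
            linarith
          obtain ⟨μ, hμ⟩ := this
          obtain ⟨x, hx⟩ := hcov μ
          have h1 : (1:ℝ) < min |v i μ - v j μ| α := lt_min hμ hα
          have := hwnorm x
          linarith
        · -- ‖v‖ ≤ 1 → ‖w‖ ≤ 1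
          intro hv1
          apply (pi_norm_le_iff_of_nonneg zero_le_one).mpr
          intro x
          rw [Real.norm_eq_abs]
          exact le_trans (hwle x) (le_trans (hvnorm _) hv1)
      · constructor
        · -- α ≤ ‖w‖ → α ≤ ‖v‖
          intro hwα
          by_contra hvα
          push_neg at hvα
          have hwall : ∀ x : Fin (d*K), |(w i - w j) x| < α := by
            intro x
            refine lt_of_le_of_lt (hwle x) ?_
            exact lt_of_le_of_lt (hvnorm _) hvα
          have : ‖w i - w j‖ < α := by
            apply (pi_norm_lt_iff hα0).mpr
            intro x
            rw [Real.norm_eq_abs]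
            exact hwall x
          linarith
        · -- α ≤ ‖v‖ → α ≤ ‖w‖
          intro hvα
          have : ∃ μ : Fin d, α ≤ |v i μ - v j μ| := by
            by_contra hall
            push_neg at hall
            have : ‖v i - v j‖ < α := by
              apply (pi_norm_lt_iff hα0).mpr
              intro μ
              rw [Real.norm_eq_abs, Pi.sub_apply]
              exact hall μ
            linarith
          obtain ⟨μ, hμ⟩ := this
          obtain ⟨x, hx⟩ := hcov μ
          rw [min_eq_right hμ] at hx
          exact le_trans hx (hwnorm x)
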